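/- Let A and B be C*-algebras with A unital, and let T : A → B be a linear map which is a *-homomorphism at the unit of A. Then T is a Jordan *-homomorphism, that is, T(a*) = T(a)* for every a ∈ A and T(a²) = T(a)² for every a ∈ A. -/

import Mathlib

open Complex NormedSpace

/-- A map `T` between C*-algebras is a `*`-homomorphism at the point `z` if
`a * b* = z` implies `T (a * b*) = T a * (T b)* = T z` and
`c* * d = z` implies `T (c* * d) = (T c)* * T d = T z`. -/
def IsStarHomAt {A B : Type*} [Mul A] [Star A] [Mul B] [Star B]
    (T : A → B) (z : A) : Prop :=
  (∀ a b : A, a * star b = z →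
      T (a * star b) = T a * star (T b) ∧ T a * star (T b) = T z) ∧
  (∀ c d : A, star c * d = z →
      T (star c * d) = star (T c) * T d ∧ star (T c) * T d = T z)

set_option maxHeartbeats 2000000 in
theorem stmt4 {A B : Type*}
    [NormedRing A] [StarRing A] [CStarRing A] [CompleteSpace A]
    [NormedAlgebra ℂ A] [StarModule ℂ A]
    [NonUnitalNormedRing B] [StarRing B] [CStarRing B] [CompleteSpace B]
    [NormedSpace ℂ B] [IsScalarTower ℂ B B] [SMulCommClass ℂ B B] [StarModule ℂ B]
    (T : A →ₗ[ℂ] B)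
    (h : IsStarHomAt (⇑T) 1) :
    (∀ a : A, T (star a) = star (T a)) ∧ (∀ a : A, T (a * a) = T a * T a) := by
  obtain ⟨h1, h2⟩ := h
  rcases subsingleton_or_nontrivial A with hA | hA
  · refine ⟨fun a => ?_, fun a => ?_⟩
    · rw [Subsingleton.elim (star a) (0 : A), Subsingleton.elim a (0 : A)]
      simp
    · rw [Subsingleton.elim (a * a) (0 : A), Subsingleton.elim a (0 : A)]
      simp
  set p := T 1 with hpdef
  have hp1 : p * star p = p := (h1 1 1 (by simp)).2
  have hps : star p = p := by
    have h' := congrArg star hp1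
    rw [star_mul, star_star, hp1] at h'
    exact h'.symm
  have hpp : p * p = p := by nth_rewrite 2 [← hps]; exact hp1
  have hpnorm : ‖p‖ ≤ 1 := by
    rcases eq_or_ne p 0 with h0 | h0
    · simp [h0]
    · have hn := CStarRing.norm_star_mul_self (x := p)
      rw [hps, hpp] at hn
      have hpos : (0 : ℝ) < ‖p‖ := norm_pos_iff.mpr h0
      nlinarith
  -- key facts about images of unitaries
  have key_u : ∀ u : A, u * star u = 1 → star u * u = 1 →
      T u * p = T u ∧ p * T u = T u ∧ ‖T u‖ ≤ 1 := by
    intro u hu1 hu2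
    have e1 : T u * star (T u) = p := (h1 u u hu1).2
    have e2 : star (T u) * T u = p := (h2 u u hu2).2
    set v := T u with hvdef
    have hvp : v * p = v := by
      have hz : star (v * p - v) * (v * p - v) = 0 := by
        have hsx : star (v * p - v) = p * star v - star v := by
          rw [star_sub, star_mul, hps]
        rw [hsx]
        have expand : (p * star v - star v) * (v * p - v) =
            p * (star v * v) * p - p * (star v * v) - (star v * v) * p +
              star v * v := by noncomm_ring
        rw [expand, e2]
        simp only [hpp]
        abel
      have := (CStarRing.star_mul_self_eq_zero_iff (v * p - v)).mp hz
      exact sub_eq_zero.mp this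
    have hpv : p * v = v := by
      have hh : p * v = v * p := by
        calc p * v = v * star v * v := by rw [e1]
          _ = v * (star v * v) := by rw [mul_assoc]
          _ = v * p := by rw [e2]
      rw [hh, hvp]
    refine ⟨hvp, hpv, ?_⟩
    have hn := CStarRing.norm_star_mul_self (x := v)
    rw [e2] at hn
    nlinarith [norm_nonneg v, norm_nonneg p, hpnorm]
  -- a small complex arithmetic fact
  have key_c : ∀ x s : ℝ, x ^ 2 + s ^ 2 = 1 →
      ((x : ℂ) + (s : ℂ) * I) * ((x : ℂ) + (s : ℂ) * -I) = 1 := by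
    intro x s hxs
    have hc2 : ((x : ℂ)) ^ 2 + ((s : ℂ)) ^ 2 = 1 := by
      rw [show ((x : ℂ)) ^ 2 + ((s : ℂ)) ^ 2 = ((x ^ 2 + s ^ 2 : ℝ) : ℂ) by push_cast; ring,
        hxs]
      norm_num
    have hI : (I : ℂ) ^ 2 = -1 := Complex.I_sq
    linear_combination hc2 - (s : ℂ) ^ 2 * hI
  -- existence of unitaries averaging to a given selfadjoint contraction
  have exists_u : ∀ a : A, IsSelfAdjoint a → ‖a‖ ≤ 1 →
      ∃ u : A, u * star u = 1 ∧ star u * u = 1 ∧ u + star u = a + a := by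
    intro a ha hna
    letI : CStarAlgebra A := { }
    have hnormal : IsStarNormal a := ha.isStarNormal
    set f : ℂ → ℂ := fun z => (z.re : ℂ) + (Real.sqrt (1 - z.re ^ 2) : ℝ) * Complex.I
      with hfdef
    have hfc : Continuous f := by
      apply Continuous.add
      · exact continuous_ofReal.comp continuous_re
      · exact (continuous_ofReal.comp ((continuous_const.sub
          ((continuous_re.pow 2))).sqrt)).mul continuous_const
    have hspec : ∀ z ∈ spectrum ℂ a, z = (z.re : ℂ) ∧ z.re ^ 2 ≤ 1 := by
      intro z hz
      have hre : z = (z.re : ℂ) := ha.mem_spectrum_eq_re hz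
      refine ⟨hre, ?_⟩
      have hb : ‖z‖ ≤ ‖a‖ := spectrum.norm_le_norm_of_mem hz
      have habs : |z.re| ≤ 1 := by
        have he : ‖((z.re : ℝ) : ℂ)‖ = |z.re| := by
          rw [Complex.norm_real, Real.norm_eq_abs]
        rw [← he, ← hre]
        exact le_trans hb hna
      nlinarith [abs_nonneg z.re, _root_.sq_abs z.re]
    have hsf : ∀ z : ℂ, star (f z) = (z.re : ℂ) +
        (Real.sqrt (1 - z.re ^ 2) : ℝ) * -I := by
      intro z
      simp only [hfdef, Complex.star_def, map_add, map_mul, Complex.conj_ofReal,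
        Complex.conj_I]
    have hsq' : ∀ z ∈ spectrum ℂ a,
        z.re ^ 2 + Real.sqrt (1 - z.re ^ 2) ^ 2 = 1 := by
      intro z hz
      have hsq := (hspec z hz).2
      rw [Real.sq_sqrt (by linarith)]
      ring
    set u : A := cfc f a with hudef
    have hstar_u : star u = cfc (fun z => star (f z)) a := (cfc_star f a).symm
    have hmul1 : u * star u = 1 := by
      rw [hudef, hstar_u, ← cfc_mul f (fun z => star (f z)) a
        hfc.continuousOn (continuous_star.comp hfc).continuousOn]
      have hcongr : cfc (fun z => f z * star (f z)) a = cfc (fun _ : ℂ => (1 : ℂ)) a := by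
        apply cfc_congr
        intro z hz
        have hkc := key_c z.re (Real.sqrt (1 - z.re ^ 2)) (hsq' z hz)
        simp only [hsf z]
        simp only [hfdef]
        exact hkc
      rw [hcongr]
      exact cfc_const_one ℂ a
    have hmul2 : star u * u = 1 := by
      rw [hudef, hstar_u, ← cfc_mul (fun z => star (f z)) f a
        (continuous_star.comp hfc).continuousOn hfc.continuousOn]
      have hcongr : cfc (fun z => star (f z) * f z) a = cfc (fun _ : ℂ => (1 : ℂ)) a := by
        apply cfc_congr
        intro z hz
        have hkc := key_c z.re (Real.sqrt (1 - z.re ^ 2)) (hsq' z hz)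
        simp only [hsf z]
        simp only [hfdef]
        rw [mul_comm]
        exact hkc
      rw [hcongr]
      exact cfc_const_one ℂ a
    have hadd : u + star u = a + a := by
      rw [hudef, hstar_u, ← cfc_add (a := a) f (fun z => star (f z))
        hfc.continuousOn (continuous_star.comp hfc).continuousOn]
      have hcongr : cfc (fun z => f z + star (f z)) a = cfc (fun z : ℂ => z + z) a := by
        apply cfc_congr
        intro z hz
        simp only [hsf z]
        simp only [hfdef]
        rw [← (hspec z hz).1]
        ring
      rw [hcongr, cfc_add (a := a) (fun z => z) (fun z => z) continuous_id.continuousOn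
        continuous_id.continuousOn, cfc_id' ℂ a]
    exact ⟨u, hmul1, hmul2, hadd⟩
  -- corner and norm facts for selfadjoint elements
  have sa_facts : ∀ a : A, IsSelfAdjoint a →
      T a * p = T a ∧ p * T a = T a ∧ ‖T a‖ ≤ ‖a‖ := by
    intro a ha
    rcases eq_or_ne a 0 with rfl | hne
    · simp
    · have hr : (0 : ℝ) < ‖a‖ := norm_pos_iff.mpr hne
      set a' : A := ((‖a‖ : ℂ))⁻¹ • a with ha'def
      have ha' : IsSelfAdjoint a' := by
        rw [isSelfAdjoint_iff, ha'def, star_smul, ha.star_eq]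
        congr 1
        simp [Complex.star_def, map_inv₀, Complex.conj_ofReal]
      have hna' : ‖a'‖ ≤ 1 := by
        rw [ha'def, norm_smul, norm_inv, Complex.norm_real, Real.norm_eq_abs,
          abs_of_pos hr, inv_mul_cancel₀ hr.ne']
      obtain ⟨u, hu1, hu2, hadd⟩ := exists_u a' ha' hna'
      obtain ⟨k1, k2, k3⟩ := key_u u hu1 hu2
      obtain ⟨k1', k2', k3'⟩ := key_u (star u)
        (by rw [star_star]; exact hu2) (by rw [star_star]; exact hu1)
      have ha2 : a' = (2 : ℂ)⁻¹ • (u + star u) := by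
        rw [hadd, ← two_smul ℂ a', smul_smul]
        norm_num
      have haa : a = (‖a‖ : ℂ) • a' := by
        rw [ha'def, smul_smul, mul_inv_cancel₀ (by exact_mod_cast hr.ne'), one_smul]
      have hTa : T a = (‖a‖ : ℂ) • ((2 : ℂ)⁻¹ • (T u + T (star u))) := by
        nth_rewrite 1 [haa]
        rw [map_smul, ha2, map_smul, map_add]
      refine ⟨?_, ?_, ?_⟩
      · rw [hTa, smul_mul_assoc, smul_mul_assoc, add_mul, k1, k1']
      · rw [hTa, mul_smul_comm, mul_smul_comm, mul_add, k2, k2']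
      · rw [hTa, norm_smul, norm_smul]
        have hle : ‖T u + T (star u)‖ ≤ 2 := by
          calc ‖T u + T (star u)‖ ≤ ‖T u‖ + ‖T (star u)‖ := norm_add_le _ _
            _ ≤ 2 := by linarith
        have h2n : ‖(2 : ℂ)⁻¹‖ = 2⁻¹ := by norm_num
        rw [h2n, Complex.norm_real, Real.norm_eq_abs, abs_of_pos hr]
        nlinarith [norm_nonneg (T u + T (star u))]
  -- decomposition into selfadjoint parts
  have decomp : ∀ a : A, ∃ x y : A, IsSelfAdjoint x ∧ IsSelfAdjoint y ∧
      a = x + Complex.I • y ∧ ‖x‖ ≤ ‖a‖ ∧ ‖y‖ ≤ ‖a‖ := by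
    intro a
    have hstar2 : star ((2 : ℂ)⁻¹) = (2 : ℂ)⁻¹ := by
      simp [Complex.star_def, map_inv₀]
    have hstarc : star (-Complex.I * (2 : ℂ)⁻¹) = -(-Complex.I * (2 : ℂ)⁻¹) := by
      rw [star_mul', hstar2, star_neg, Complex.star_def, Complex.conj_I]
      ring
    refine ⟨(2 : ℂ)⁻¹ • (a + star a), (-Complex.I * (2 : ℂ)⁻¹) • (a - star a),
      ?_, ?_, ?_, ?_, ?_⟩
    · rw [isSelfAdjoint_iff, star_smul, star_add, star_star, hstar2]
      module
    · rw [isSelfAdjoint_iff, star_smul, star_sub, star_star, hstarc]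
      module
    · have hI2 : Complex.I * (-Complex.I * (2 : ℂ)⁻¹) = (2 : ℂ)⁻¹ := by
        rw [← mul_assoc, mul_neg, Complex.I_mul_I]
        ring
      rw [smul_smul, hI2]
      module
    · rw [norm_smul]
      have h2n : ‖(2 : ℂ)⁻¹‖ = 2⁻¹ := by norm_num
      rw [h2n]
      calc 2⁻¹ * ‖a + star a‖ ≤ 2⁻¹ * (‖a‖ + ‖star a‖) := by
            have := norm_add_le a (star a); nlinarith
        _ = ‖a‖ := by rw [norm_star]; ring
    · rw [norm_smul]
      have hn : ‖-Complex.I * (2 : ℂ)⁻¹‖ = 2⁻¹ := by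
        simp [norm_mul]
      rw [hn]
      calc 2⁻¹ * ‖a - star a‖ ≤ 2⁻¹ * (‖a‖ + ‖star a‖) := by
            have := norm_sub_le a (star a); nlinarith
        _ = ‖a‖ := by rw [norm_star]; ring
  -- corner facts for all elements
  have corner : ∀ a : A, T a * p = T a ∧ p * T a = T a := by
    intro a
    obtain ⟨x, y, hx, hy, rfl, -, -⟩ := decomp a
    obtain ⟨x1, x2, -⟩ := sa_facts x hx
    obtain ⟨y1, y2, -⟩ := sa_facts y hy
    rw [map_add, map_smul]
    constructor
    · rw [add_mul, smul_mul_assoc, x1, y1]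
    · rw [mul_add, mul_smul_comm, x2, y2]
  -- T is bounded
  have bound : ∀ a : A, ‖T a‖ ≤ 2 * ‖a‖ := by
    intro a
    obtain ⟨x, y, hx, hy, rfl, hnx, hny⟩ := decomp a
    obtain ⟨-, -, x3⟩ := sa_facts x hx
    obtain ⟨-, -, y3⟩ := sa_facts y hy
    rw [map_add, map_smul]
    calc ‖T x + Complex.I • T y‖ ≤ ‖T x‖ + ‖Complex.I • T y‖ := norm_add_le _ _
      _ = ‖T x‖ + ‖T y‖ := by rw [norm_smul, Complex.norm_I, one_mul]
      _ ≤ 2 * ‖x + Complex.I • y‖ := by linarith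
  have cont : Continuous T := AddMonoidHomClass.continuous_of_bound T 2 bound
  set Tc : A →L[ℂ] B := ⟨T, cont⟩ with hTcdef
  set TR : A →L[ℝ] B := Tc.restrictScalars ℝ with hTRdef
  -- the raw derivative relations for selfadjoint elements
  have relations : ∀ h0 : A, IsSelfAdjoint h0 →
      (T 1 * star (T (Complex.I • h0)) + T (Complex.I • h0) * star (T 1) = 0) ∧
      ((T 1 * star (T (Complex.I • h0 * (Complex.I • h0))) +
          T (Complex.I • h0) * star (T (Complex.I • h0))) +
        (T (Complex.I • h0) * star (T (Complex.I • h0)) +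
          T (Complex.I • h0 * (Complex.I • h0)) * star (T 1)) = 0) := by
    intro h0 hh0
    set k : A := Complex.I • h0 with hkdef
    have hks : star k = -k := by
      rw [hkdef, star_smul, hh0.star_eq, Complex.star_def, Complex.conj_I, neg_smul]
    set v : ℝ → A := fun t => NormedSpace.exp (t • k) with hvdef
    have hv : ∀ t : ℝ, HasDerivAt v (k * v t) t := fun t =>
      hasDerivAt_exp_smul_const' k t
    have hstar_vt : ∀ t : ℝ, star (v t) = NormedSpace.exp (-(t • k)) := by
      intro t
      simp only [hvdef]
      rw [star_exp, star_smul, star_trivial, hks, smul_neg]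
    have hunit : ∀ t : ℝ, v t * star (v t) = 1 := by
      intro t
      rw [hstar_vt t]
      simp only [hvdef]
      rw [← exp_add_of_commute_of_mem_ball (𝕂 := ℝ) ((Commute.refl ((t : ℝ) • k)).neg_right)
        ((expSeries_radius_eq_top ℝ A).symm ▸ edist_lt_top _ _)
        ((expSeries_radius_eq_top ℝ A).symm ▸ edist_lt_top _ _)]
      simp
    have hv0 : v 0 = 1 := by simp only [hvdef]; simp
    have hTv : ∀ t : ℝ, T (v t) * star (T (v t)) = p := fun t =>
      (h1 (v t) (v t) (hunit t)).2
    have hF : ∀ t : ℝ, HasDerivAt (fun s => T (v s)) (T (k * v t)) t := fun t =>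
      TR.hasFDerivAt.comp_hasDerivAt t (hv t)
    have hv2 : ∀ t : ℝ, HasDerivAt (fun s => k * v s) (k * (k * v t)) t := fun t =>
      (ContinuousLinearMap.mul ℝ A k).hasFDerivAt.comp_hasDerivAt t (hv t)
    have hF2 : ∀ t : ℝ, HasDerivAt (fun s => T (k * v s)) (T (k * (k * v t))) t := fun t =>
      TR.hasFDerivAt.comp_hasDerivAt t (hv2 t)
    have hP : ∀ t : ℝ, HasDerivAt (fun s => T (v s) * star (T (v s)))
        (T (v t) * star (T (k * v t)) + T (k * v t) * star (T (v t))) t := by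
      intro t
      have := (ContinuousLinearMap.mul ℝ B).hasDerivAt_of_bilinear (fun _ => hF t) (fun _ => (hF t).star)
      simpa using this
    have hD : ∀ t : ℝ, T (v t) * star (T (k * v t)) + T (k * v t) * star (T (v t)) = 0 := by
      intro t
      have hc : (fun s : ℝ => T (v s) * star (T (v s))) = fun _ => p :=
        funext fun s => hTv s
      have hP' := hP t
      rw [hc] at hP'
      exact hP'.unique (hasDerivAt_const t p)
    have hQ : HasDerivAt
        (fun s : ℝ => T (v s) * star (T (k * v s)) + T (k * v s) * star (T (v s)))
        ((T (v 0) * star (T (k * (k * v 0))) + T (k * v 0) * star (T (k * v 0))) +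
          (T (k * v 0) * star (T (k * v 0)) + T (k * (k * v 0)) * star (T (v 0)))) 0 := by
      have A1 := (ContinuousLinearMap.mul ℝ B).hasDerivAt_of_bilinear (fun _ => hF 0) (fun _ => (hF2 0).star)
      have A2 := (ContinuousLinearMap.mul ℝ B).hasDerivAt_of_bilinear (fun _ => hF2 0) (fun _ => (hF 0).star)
      have := A1.add A2
      simpa [Pi.add_def] using this
    have hR2 : (T (v 0) * star (T (k * (k * v 0))) + T (k * v 0) * star (T (k * v 0))) +
        (T (k * v 0) * star (T (k * v 0)) + T (k * (k * v 0)) * star (T (v 0))) = 0 := by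
      have hc : (fun s : ℝ => T (v s) * star (T (k * v s)) + T (k * v s) * star (T (v s)))
          = fun _ => (0 : B) := funext fun s => hD s
      have hQ' := hQ
      rw [hc] at hQ'
      exact hQ'.unique (hasDerivAt_const 0 0)
    have hR1 := hD 0
    rw [hv0, mul_one] at hR1
    rw [hv0, mul_one] at hR2
    exact ⟨hR1, hR2⟩
  -- cancellation helpers
  have smul_I_cancel : ∀ x y : B, Complex.I • x = Complex.I • y → x = y := by
    intro x y hxy
    have h' := congrArg (fun z => (-Complex.I) • z) hxy
    simp only [smul_smul] at h'
    rwa [show -Complex.I * Complex.I = 1 by rw [neg_mul, Complex.I_mul_I, neg_neg],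
      one_smul, one_smul] at h'
  have two_cancel : ∀ x y : B, x + x = y + y → x = y := by
    intro x y hxy
    have h2 : (2 : ℂ) • (x - y) = 0 := by
      rw [two_smul, sub_add_sub_comm, hxy, sub_self]
    have h' := congrArg (fun z => ((2 : ℂ))⁻¹ • z) h2
    simp only [smul_smul, smul_zero] at h'
    rw [show ((2 : ℂ))⁻¹ * 2 = 1 by norm_num, one_smul] at h'
    exact sub_eq_zero.mp h'
  -- star preservation on selfadjoint elements
  have hstar_sa : ∀ h0 : A, IsSelfAdjoint h0 → star (T h0) = T h0 := by
    intro h0 hh0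
    have hR1 := (relations h0 hh0).1
    obtain ⟨c1, c2, -⟩ := sa_facts h0 hh0
    rw [map_smul, hps] at hR1
    rw [star_smul, Complex.star_def, Complex.conj_I, neg_smul, mul_neg,
      mul_smul_comm, smul_mul_assoc, c1] at hR1
    -- hR1 : -(I • (p * star (T h0))) + I • T h0 = 0
    have hR1' : Complex.I • T h0 = Complex.I • (p * star (T h0)) := by
      have h' := congrArg (fun z => z + Complex.I • (p * star (T h0))) hR1
      simp only [zero_add] at h'
      rw [add_assoc, add_comm (Complex.I • T h0), ← add_assoc, neg_add_cancel,
        zero_add] at h'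
      exact h'
    have hinj := smul_I_cancel _ _ hR1'
    -- hinj : T h0 = p * star (T h0)
    have h'' := congrArg star hinj
    rw [star_mul, star_star, hps] at h''
    -- h'' : star (T h0) = T h0 * p
    rw [c1] at h''
    exact h''
  -- multiplicativity on squares of selfadjoint elements
  have hsq_sa : ∀ h0 : A, IsSelfAdjoint h0 → T (h0 * h0) = T h0 * T h0 := by
    intro h0 hh0
    have hR2 := (relations h0 hh0).2
    obtain ⟨c1, c2, -⟩ := sa_facts h0 hh0
    have hsqsa : IsSelfAdjoint (h0 * h0) := by
      rw [isSelfAdjoint_iff, star_mul, hh0.star_eq]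
    obtain ⟨d1, d2, -⟩ := sa_facts (h0 * h0) hsqsa
    have hkk : Complex.I • h0 * (Complex.I • h0) = -(h0 * h0) := by
      rw [smul_mul_smul_comm, Complex.I_mul_I, neg_one_smul]
    have hTsk : star (T (Complex.I • h0)) = -(Complex.I • T h0) := by
      rw [map_smul, star_smul, Complex.star_def, Complex.conj_I, neg_smul,
        hstar_sa h0 hh0]
    have hTkk : T (Complex.I • h0 * (Complex.I • h0)) = -(T (h0 * h0)) := by
      rw [hkk, map_neg]
    have hterm : T (Complex.I • h0) * star (T (Complex.I • h0)) = T h0 * T h0 := by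
      rw [hTsk, map_smul, mul_neg, mul_smul_comm, smul_mul_assoc, smul_smul,
        Complex.I_mul_I, neg_one_smul, neg_neg]
    rw [hterm, hTkk, star_neg, hstar_sa (h0 * h0) hsqsa, ← hpdef] at hR2
    rw [mul_neg, d2, hps, neg_mul, d1] at hR2
    -- hR2 : -(T (h0*h0)) + T h0 * T h0 + (T h0 * T h0 + -(T (h0*h0))) = 0
    apply (two_cancel _ _ ?_).symm
    have h' := congrArg (fun z => z + (T (h0 * h0) + T (h0 * h0))) hR2
    simp only [zero_add] at h'
    rw [← h']
    abel
  -- mixed products of selfadjoint elements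
  have hmix : ∀ x y : A, IsSelfAdjoint x → IsSelfAdjoint y →
      T (x * y) + T (y * x) = T x * T y + T y * T x := by
    intro x y hx hy
    have h1' := hsq_sa (x + y) (hx.add hy)
    have e1 : (x + y) * (x + y) = x * x + (x * y + y * x) + y * y := by noncomm_ring
    rw [e1] at h1'
    simp only [map_add] at h1'
    rw [hsq_sa x hx, hsq_sa y hy] at h1'
    have e2 : (T x + T y) * (T x + T y) =
        T x * T x + (T x * T y + T y * T x) + T y * T y := by noncomm_ring
    rw [e2] at h1'
    have h3 := add_right_cancel h1'
    exact add_left_cancel h3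
  -- final assembly
  constructor
  · intro a
    obtain ⟨x, y, hx, hy, rfl, -, -⟩ := decomp a
    have hsy : star (Complex.I • y) = -(Complex.I • y) := by
      rw [star_smul, Complex.star_def, Complex.conj_I, hy.star_eq, neg_smul]
    rw [star_add, hsy, hx.star_eq, map_add, map_neg, map_add, map_smul,
      star_add, hstar_sa x hx, star_smul, Complex.star_def, Complex.conj_I,
      hstar_sa y hy, neg_smul]
  · intro a
    obtain ⟨x, y, hx, hy, rfl, -, -⟩ := decomp a
    have expandA : (x + Complex.I • y) * (x + Complex.I • y) =
        x * x - y * y + Complex.I • (x * y) + Complex.I • (y * x) := by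
      rw [mul_add, add_mul, add_mul, smul_mul_smul_comm, Complex.I_mul_I, neg_one_smul,
        mul_smul_comm, smul_mul_assoc]
      abel
    have expandB : (T x + Complex.I • T y) * (T x + Complex.I • T y) =
        T x * T x - T y * T y + Complex.I • (T x * T y) + Complex.I • (T y * T x) := by
      rw [mul_add, add_mul, add_mul, smul_mul_smul_comm, Complex.I_mul_I, neg_one_smul,
        mul_smul_comm, smul_mul_assoc]
      abel
    calc T ((x + Complex.I • y) * (x + Complex.I • y))
        = T (x * x) - T (y * y) + Complex.I • (T (x * y) + T (y * x)) := by
          rw [expandA, map_add, map_add, map_sub, map_smul, map_smul, smul_add]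
          abel
      _ = T x * T x - T y * T y + Complex.I • (T x * T y + T y * T x) := by
          rw [hsq_sa x hx, hsq_sa y hy, hmix x y hx hy]
      _ = (T x + Complex.I • T y) * (T x + Complex.I • T y) := by
          rw [expandB, smul_add]
          abel
      _ = T (x + Complex.I • y) * T (x + Complex.I • y) := by rw [map_add, map_smul]
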